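/- For every generic 2×2 complex matrix G there exist R > 0, ρ > 0 and θ ∈ [0, π/4] such that for all n ≥ 1 and z ∈ ℂ \ {0}: L_n(z,G) = R^n · L_n(ρ·z, F_θ), where F_θ = [[cos θ, sin θ],[sin θ, cos θ]]. -/

import Mathlib

open Matrix Complex Real

noncomputable def S (z : ℂ) (G : Matrix (Fin 2) (Fin 2) ℂ) : Matrix (Fin 2) (Fin 2) ℂ :=
  G * Matrix.diagonal ![z, z⁻¹] * Gᴴ

noncomputable def L (n : ℕ) (z : ℂ) (G : Matrix (Fin 2) (Fin 2) ℂ) : ℂ :=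
  ((S z G) ^ n).trace

noncomputable def Fmat (θ : ℝ) : Matrix (Fin 2) (Fin 2) ℂ :=
  !![(Real.cos θ : ℂ), (Real.sin θ : ℂ); (Real.sin θ : ℂ), (Real.cos θ : ℂ)]

lemma ch2 (A : Matrix (Fin 2) (Fin 2) ℂ) : A^2 = A.trace • A - A.det • 1 := by
  ext i j
  fin_cases i <;> fin_cases j <;>
    simp [pow_two, Matrix.mul_apply, Fin.sum_univ_two, Matrix.trace_fin_two,
      Matrix.det_fin_two, Matrix.one_apply] <;> ring

lemma rec2 (A : Matrix (Fin 2) (Fin 2) ℂ) (n : ℕ) :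
    (A^(n+2)).trace = A.trace * (A^(n+1)).trace - A.det * (A^n).trace := by
  have h : A^(n+2) = A.trace • A^(n+1) - A.det • A^n := by
    have : A^(n+2) = A^n * A^2 := by rw [← pow_add]
    rw [this, ch2, Matrix.mul_sub, Matrix.mul_smul, Matrix.mul_smul, mul_one,
      ← pow_succ]
  rw [h, Matrix.trace_sub, Matrix.trace_smul, Matrix.trace_smul]
  simp

lemma trace_pow_eq (A B : Matrix (Fin 2) (Fin 2) ℂ)
    (ht : A.trace = B.trace) (hd : A.det = B.det) :
    ∀ n, (A^n).trace = (B^n).trace := by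
  have key : ∀ n, (A^n).trace = (B^n).trace ∧ (A^(n+1)).trace = (B^(n+1)).trace := by
    intro n
    induction n with
    | zero => simpa using ht
    | succ m ih =>
      refine ⟨ih.2, ?_⟩
      rw [show m + 1 + 1 = m + 2 from rfl, rec2, rec2, ht, hd, ih.1, ih.2]
  exact fun n => (key n).1

lemma trace_S (z : ℂ) (G : Matrix (Fin 2) (Fin 2) ℂ) :
    (S z G).trace = z * ((Complex.normSq (G 0 0) : ℂ) + (Complex.normSq (G 1 0) : ℂ))
      + z⁻¹ * ((Complex.normSq (G 0 1) : ℂ) + (Complex.normSq (G 1 1) : ℂ)) := by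
  simp only [S, Matrix.trace_fin_two, Matrix.mul_apply, Fin.sum_univ_two,
    Matrix.diagonal, Matrix.conjTranspose_apply, Matrix.of_apply, Matrix.cons_val',
    Matrix.cons_val_zero, Matrix.cons_val_one, Matrix.head_cons, Matrix.empty_val',
    Matrix.cons_val_fin_one, Matrix.head_fin_const, ← Complex.mul_conj]
  simp [Fin.ext_iff]
  ring

lemma det_S (z : ℂ) (hz : z ≠ 0) (G : Matrix (Fin 2) (Fin 2) ℂ) :
    (S z G).det = (Complex.normSq G.det : ℂ) := by
  rw [S, Matrix.det_mul, Matrix.det_mul, Matrix.det_conjTranspose, Matrix.det_diagonal,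
    ← Complex.mul_conj]
  simp [Fin.prod_univ_two, mul_inv_cancel₀ hz]

lemma lagrange (G : Matrix (Fin 2) (Fin 2) ℂ) :
    Complex.normSq G.det =
      (Complex.normSq (G 0 0) + Complex.normSq (G 1 0)) *
      (Complex.normSq (G 0 1) + Complex.normSq (G 1 1)) -
      Complex.normSq ((starRingEnd ℂ) (G 0 0) * G 0 1 + (starRingEnd ℂ) (G 1 0) * G 1 1) := by
  simp [Matrix.det_fin_two, Complex.normSq_apply, Complex.mul_re, Complex.mul_im,
    Complex.add_re, Complex.add_im, Complex.sub_re, Complex.sub_im]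
  ring

lemma Fmat_entries (θ : ℝ) :
    Fmat θ 0 0 = (Real.cos θ : ℂ) ∧ Fmat θ 0 1 = (Real.sin θ : ℂ) ∧
    Fmat θ 1 0 = (Real.sin θ : ℂ) ∧ Fmat θ 1 1 = (Real.cos θ : ℂ) := by
  refine ⟨?_, ?_, ?_, ?_⟩ <;> simp [Fmat]

lemma det_Fmat (θ : ℝ) : (Fmat θ).det = (Real.cos (2*θ) : ℂ) := by
  have h : Real.cos θ ^2 - Real.sin θ ^2 = Real.cos (2*θ) := by
    rw [Real.cos_two_mul]; nlinarith [Real.sin_sq_add_cos_sq θ]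
  rw [Matrix.det_fin_two]
  simp [Fmat, ← h]
  ring

theorem stmt9 (G : Matrix (Fin 2) (Fin 2) ℂ)
    (hgen : (‖G 0 0‖ ^ 2 + ‖G 1 0‖ ^ 2) *
            (‖G 0 1‖ ^ 2 + ‖G 1 1‖ ^ 2) ≠ 0) :
    ∃ R > (0 : ℝ), ∃ ρ > (0 : ℝ), ∃ θ ∈ Set.Icc (0 : ℝ) (Real.pi / 4),
      ∀ n : ℕ, 1 ≤ n → ∀ z : ℂ, z ≠ 0 →
        L n z G = (R : ℂ) ^ n * L n ((ρ : ℂ) * z) (Fmat θ) := by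
  set α := Complex.normSq (G 0 0) + Complex.normSq (G 1 0) with hαdef
  set β := Complex.normSq (G 0 1) + Complex.normSq (G 1 1) with hβdef
  set γ := Complex.normSq ((starRingEnd ℂ) (G 0 0) * G 0 1 + (starRingEnd ℂ) (G 1 0) * G 1 1)
    with hγdef
  have hgen' : α * β ≠ 0 := by
    simpa [Complex.sq_norm, hαdef, hβdef] using hgen
  have hα0 : (0:ℝ) ≤ α := add_nonneg (Complex.normSq_nonneg _) (Complex.normSq_nonneg _)
  have hβ0 : (0:ℝ) ≤ β := add_nonneg (Complex.normSq_nonneg _) (Complex.normSq_nonneg _)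
  have hα : 0 < α := lt_of_le_of_ne hα0 (Ne.symm (left_ne_zero_of_mul hgen'))
  have hβ : 0 < β := lt_of_le_of_ne hβ0 (Ne.symm (right_ne_zero_of_mul hgen'))
  have hγ0 : (0:ℝ) ≤ γ := Complex.normSq_nonneg _
  have hlag : Complex.normSq G.det = α * β - γ := lagrange G
  have hγle : γ ≤ α * β := by nlinarith [Complex.normSq_nonneg G.det]
  set s := γ / (α * β) with hsdef
  have hs0 : 0 ≤ s := div_nonneg hγ0 (by positivity)
  have hs1 : s ≤ 1 := div_le_one_of_le₀ hγle (by positivity)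
  set θ := Real.arcsin (Real.sqrt s) / 2 with hθdef
  have hsqrt0 : 0 ≤ Real.sqrt s := Real.sqrt_nonneg s
  have hsqrt1 : Real.sqrt s ≤ 1 := Real.sqrt_le_one.mpr hs1
  have hsin : Real.sin (2*θ) = Real.sqrt s := by
    rw [hθdef, mul_div_cancel₀ _ (two_ne_zero)]
    exact Real.sin_arcsin (by linarith) hsqrt1
  have hcos2 : Real.cos (2*θ) ^ 2 = 1 - s := by
    have h := Real.sin_sq_add_cos_sq (2*θ)
    rw [hsin, Real.sq_sqrt hs0] at h
    linarith
  set R := Real.sqrt (α * β) with hRdef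
  set ρ := Real.sqrt (α / β) with hρdef
  have hR : 0 < R := Real.sqrt_pos.mpr (by positivity)
  have hρ : 0 < ρ := Real.sqrt_pos.mpr (by positivity)
  have hR2 : R ^ 2 = α * β := Real.sq_sqrt (by positivity)
  have hRρ : R * ρ = α := by
    rw [hRdef, hρdef, ← Real.sqrt_mul (by positivity)]
    have h : α * β * (α / β) = α ^ 2 := by field_simp
    rw [h, Real.sqrt_sq hα.le]
  have hRβ : R * ρ⁻¹ = β := by
    rw [hRdef, hρdef, ← Real.sqrt_inv, ← Real.sqrt_mul (by positivity)]
    have h : α * β * (α / β)⁻¹ = β ^ 2 := by field_simp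
    rw [h, Real.sqrt_sq hβ.le]
  refine ⟨R, hR, ρ, hρ, θ, ⟨?_, ?_⟩, ?_⟩
  · rw [hθdef]
    have := Real.arcsin_nonneg.mpr hsqrt0
    linarith
  · rw [hθdef]
    have := Real.arcsin_le_pi_div_two (Real.sqrt s)
    linarith
  · intro n hn z hz
    have hρz : (ρ:ℂ) * z ≠ 0 := mul_ne_zero (by exact_mod_cast hρ.ne') hz
    set A := S z G with hA
    set B := (R:ℂ) • S ((ρ:ℂ)*z) (Fmat θ) with hB
    have hc : ((Real.sin θ : ℂ))^2 + ((Real.cos θ : ℂ))^2 = 1 := by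
      exact_mod_cast congrArg (fun x:ℝ => (x:ℂ)) (Real.sin_sq_add_cos_sq θ)
    have hFtr : (S ((ρ:ℂ)*z) (Fmat θ)).trace = (ρ:ℂ)*z + ((ρ:ℂ)*z)⁻¹ := by
      rw [trace_S]
      simp only [Fmat, Matrix.cons_val', Matrix.cons_val_zero, Matrix.cons_val_one,
        Matrix.head_cons, Matrix.empty_val', Matrix.cons_val_fin_one, Matrix.head_fin_const,
        Matrix.of_apply, Complex.normSq_ofReal]
      have h1 : ((Real.cos θ * Real.cos θ : ℝ) : ℂ) + ((Real.sin θ * Real.sin θ : ℝ):ℂ) = 1 := by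
        have hr : Real.cos θ * Real.cos θ + Real.sin θ * Real.sin θ = 1 := by
          nlinarith [Real.sin_sq_add_cos_sq θ]
        exact_mod_cast congrArg (fun x:ℝ => (x:ℂ)) hr
      rw [show ((Real.sin θ * Real.sin θ : ℝ):ℂ) = 1 - ((Real.cos θ * Real.cos θ : ℝ) : ℂ) from by
        linear_combination h1]
      ring
    have hc1 : (R:ℂ) * (ρ:ℂ) = (Complex.normSq (G 0 0) : ℂ) + (Complex.normSq (G 1 0) : ℂ) := by
      have h := congrArg (fun x:ℝ => (x:ℂ)) hRρ
      push_cast at h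
      rw [h, hαdef]
      push_cast
      ring
    have hc2 : (R:ℂ) * ((ρ:ℂ))⁻¹ = (Complex.normSq (G 0 1) : ℂ) + (Complex.normSq (G 1 1) : ℂ) := by
      have h := congrArg (fun x:ℝ => (x:ℂ)) hRβ
      push_cast at h
      rw [h, hβdef]
      push_cast
      ring
    have htr : A.trace = B.trace := by
      rw [hA, hB, Matrix.trace_smul, hFtr, trace_S, smul_eq_mul, ← hc1, ← hc2]
      ring
    have hFdet : Complex.normSq (Fmat θ).det = 1 - s := by
      rw [det_Fmat, Complex.normSq_ofReal, ← sq, hcos2]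
    have hGdet : Complex.normSq G.det = R^2 * (1 - s) := by
      rw [hlag, hR2, hsdef]
      field_simp
    have hdet : A.det = B.det := by
      rw [hA, hB, Matrix.det_smul, det_S z hz, det_S _ hρz, hFdet, hGdet]
      simp only [Fintype.card_fin, smul_eq_mul]
      push_cast
      ring
    have hkey := trace_pow_eq A B htr hdet n
    rw [L, L, ← hA, hkey, hB, smul_pow, Matrix.trace_smul, smul_eq_mul]
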